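/- arXiv:1705.00722 — 5 statements merged into one kernel-verified Lean document; each statement's English description precedes it below -/
import Mathlib

section
/- Let Σ be a symmetric positive definite d×d real matrix, R a symmetric positive definite k×k real matrix, H a k×d real matrix, μ ∈ ℝ^d, y, c ∈ ℝ^k, and set S = H Σ Hᵀ + R, K = Σ Hᵀ S⁻¹, ỹ = y − c + H μ, and Σ̂ = (Σ⁻¹ + Hᵀ R⁻¹ H)⁻¹. Then Σ̂ (Σ⁻¹ μ + Hᵀ R⁻¹ ỹ) = μ + K (y − c). -/
open Matrix

/-- **EKF posterior-mean identity (Corollary 2).**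
With `S = H V Hᵀ + R`, `K = V Hᵀ S⁻¹`, `ỹ = y − c + H μ`, and
`Σ̂ = (V⁻¹ + Hᵀ R⁻¹ H)⁻¹`, the information-form mean
`Σ̂ (V⁻¹ μ + Hᵀ R⁻¹ ỹ)` equals the Kalman-form mean `μ + K (y − c)`. -/
theorem ekf_posterior_mean_identity
    {d k : ℕ}
    (V : Matrix (Fin d) (Fin d) ℝ) (hVsymm : V.IsSymm) (hVpd : V.PosDef)
    (R : Matrix (Fin k) (Fin k) ℝ) (hRsymm : R.IsSymm) (hRpd : R.PosDef)
    (H : Matrix (Fin k) (Fin d) ℝ)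
    (μ : Fin d → ℝ) (y c : Fin k → ℝ)
    (S : Matrix (Fin k) (Fin k) ℝ) (hS : S = H * V * Hᵀ + R)
    (K : Matrix (Fin d) (Fin k) ℝ) (hK : K = V * Hᵀ * S⁻¹)
    (ytil : Fin k → ℝ) (hy : ytil = y - c + H *ᵥ μ)
    (Vhat : Matrix (Fin d) (Fin d) ℝ) (hVhat : Vhat = (V⁻¹ + Hᵀ * R⁻¹ * H)⁻¹) :
    Vhat *ᵥ (V⁻¹ *ᵥ μ + Hᵀ *ᵥ (R⁻¹ *ᵥ ytil)) = μ + K *ᵥ (y - c) := by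
  have hSpd : S.PosDef := by
    rw [hS]
    have := (hVpd.posSemidef.mul_mul_conjTranspose_same H)
    rw [conjTranspose_eq_transpose_of_trivial] at this
    exact Matrix.PosDef.posSemidef_add this hRpd
  have hJpd : (V⁻¹ + Hᵀ * R⁻¹ * H).PosDef := by
    have := (hRpd.inv.posSemidef.conjTranspose_mul_mul_same H)
    rw [conjTranspose_eq_transpose_of_trivial] at this
    exact hVpd.inv.add_posSemidef this
  have hVdet : IsUnit V.det := isUnit_iff_ne_zero.mpr (ne_of_gt hVpd.det_pos)
  have hRdet : IsUnit R.det := isUnit_iff_ne_zero.mpr (ne_of_gt hRpd.det_pos)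
  have hSdet : IsUnit S.det := isUnit_iff_ne_zero.mpr (ne_of_gt hSpd.det_pos)
  have hJdet : IsUnit (V⁻¹ + Hᵀ * R⁻¹ * H).det :=
    isUnit_iff_ne_zero.mpr (ne_of_gt hJpd.det_pos)
  -- key: J * K = Hᵀ * R⁻¹
  have hJK : (V⁻¹ + Hᵀ * R⁻¹ * H) * K = Hᵀ * R⁻¹ := by
    have h1 : (V⁻¹ + Hᵀ * R⁻¹ * H) * (V * Hᵀ) = Hᵀ * R⁻¹ * S := by
      rw [hS, Matrix.add_mul, Matrix.mul_add]
      rw [show V⁻¹ * (V * Hᵀ) = V⁻¹ * V * Hᵀ from (Matrix.mul_assoc _ _ _).symm,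
        nonsing_inv_mul V hVdet, Matrix.one_mul]
      rw [show Hᵀ * R⁻¹ * R = Hᵀ * (R⁻¹ * R) from Matrix.mul_assoc _ _ _,
        nonsing_inv_mul R hRdet, Matrix.mul_one]
      simp [Matrix.mul_assoc, add_comm]
    calc (V⁻¹ + Hᵀ * R⁻¹ * H) * K = (V⁻¹ + Hᵀ * R⁻¹ * H) * (V * Hᵀ) * S⁻¹ := by
          rw [hK, ← Matrix.mul_assoc]
      _ = Hᵀ * R⁻¹ * (S * S⁻¹) := by rw [h1, Matrix.mul_assoc]
      _ = Hᵀ * R⁻¹ := by rw [mul_nonsing_inv S hSdet, Matrix.mul_one]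
  -- key vector identity
  have hvec : (V⁻¹ + Hᵀ * R⁻¹ * H) *ᵥ (μ + K *ᵥ (y - c))
      = V⁻¹ *ᵥ μ + Hᵀ *ᵥ (R⁻¹ *ᵥ ytil) := by
    rw [mulVec_add, mulVec_mulVec, hJK, hy]
    simp only [add_mulVec, mulVec_add, mulVec_mulVec, Matrix.mul_assoc]
    abel
  rw [← hvec, mulVec_mulVec, hVhat, nonsing_inv_mul _ hJdet, one_mulVec]
end

section
/- Let f : ℝ^d → ℝ be a bounded measurable function, Σ a symmetric positive definite d×d real matrix, and let N(μ, Σ) denote the multivariate Gaussian with mean μ and covariance Σ. Then the map μ ↦ ∫ f(x) dN(μ,Σ)(x) is differentiable on ℝ^d, and its gradient is ∇_μ ∫ f(x) dN(μ,Σ)(x) = ∫ f(x) Σ⁻¹ (x − μ) dN(μ,Σ)(x). -/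
open MeasureTheory Matrix

/-- Density of the multivariate Gaussian `N(a, C)` with mean `a` and
symmetric positive definite covariance `C`. -/
noncomputable def gaussPdf {ι : Type*} [Fintype ι] [DecidableEq ι]
    (a : ι → ℝ) (C : Matrix ι ι ℝ) (x : ι → ℝ) : ℝ :=
  (2 * Real.pi) ^ (-(Fintype.card ι : ℝ) / 2) * C.det ^ (-(1 : ℝ) / 2) *
    Real.exp (-(1 / 2) * ((x - a) ⬝ᵥ (C⁻¹ *ᵥ (x - a))))

/-- The multivariate Gaussian measure `N(a, C)`. -/
noncomputable def gaussMeasure {ι : Type*} [Fintype ι] [DecidableEq ι]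
    (a : ι → ℝ) (C : Matrix ι ι ℝ) : Measure (ι → ℝ) :=
  volume.withDensity fun x => ENNReal.ofReal (gaussPdf a C x)


open scoped NNReal ENNReal Topology

variable {d : ℕ}

/-- The continuous linear functional `v ↦ w ⬝ᵥ v`. -/
noncomputable def dotCLM (w : Fin d → ℝ) : (Fin d → ℝ) →L[ℝ] ℝ :=
  ∑ i, w i • ContinuousLinearMap.proj i

@[simp] lemma dotCLM_apply (w v : Fin d → ℝ) : dotCLM w v = w ⬝ᵥ v := by
  simp [dotCLM, dotProduct, ContinuousLinearMap.sum_apply]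

lemma norm_proj_le (i : Fin d) :
    ‖(ContinuousLinearMap.proj i : (Fin d → ℝ) →L[ℝ] ℝ)‖ ≤ 1 :=
  ContinuousLinearMap.opNorm_le_bound _ zero_le_one fun v => by
    simpa using norm_le_pi_norm v i

lemma norm_dotCLM_le (w : Fin d → ℝ) : ‖dotCLM w‖ ≤ ∑ i, |w i| := by
  refine (norm_sum_le _ _).trans (Finset.sum_le_sum fun i _ => ?_)
  refine le_trans (ContinuousLinearMap.opNorm_smul_le (w i) _) ?_
  calc ‖w i‖ * ‖(ContinuousLinearMap.proj i : (Fin d → ℝ) →L[ℝ] ℝ)‖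
      ≤ ‖w i‖ * 1 := mul_le_mul_of_nonneg_left (norm_proj_le i) (norm_nonneg _)
    _ = |w i| := by simp [Real.norm_eq_abs]

lemma continuous_dotCLM : Continuous fun w : Fin d → ℝ => dotCLM w := by
  unfold dotCLM
  exact continuous_finset_sum _ fun i _ => (continuous_apply i).smul continuous_const

lemma hasFDerivAt_quad (A : Matrix (Fin d) (Fin d) ℝ) (hA : Aᵀ = A) (y₀ : Fin d → ℝ) :
    HasFDerivAt (fun y : Fin d → ℝ => y ⬝ᵥ A *ᵥ y) ((2:ℝ) • dotCLM (A *ᵥ y₀)) y₀ := by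
  have h : ∀ i : Fin d, HasFDerivAt (fun y : Fin d → ℝ => y i * (A *ᵥ y) i)
      (y₀ i • dotCLM (A i) + (A *ᵥ y₀) i • (ContinuousLinearMap.proj i)) y₀ := by
    intro i
    have h1 : HasFDerivAt (fun y : Fin d → ℝ => y i)
        (ContinuousLinearMap.proj i : (Fin d → ℝ) →L[ℝ] ℝ) y₀ :=
      hasFDerivAt_apply i y₀
    have h2 : HasFDerivAt (fun y : Fin d → ℝ => (A *ᵥ y) i) (dotCLM (A i)) y₀ := by
      have : (fun y : Fin d → ℝ => (A *ᵥ y) i) = fun y => dotCLM (A i) y := by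
        ext y; simp [Matrix.mulVec, dotProduct]
      rw [this]
      exact (dotCLM (A i)).hasFDerivAt
    exact h1.mul h2
  have hsum := HasFDerivAt.fun_sum (fun i (_ : i ∈ Finset.univ) => h i)
  have hfun : (fun y : Fin d → ℝ => y ⬝ᵥ A *ᵥ y)
      = fun y => ∑ i, y i * (A *ᵥ y) i := by
    funext y; simp [dotProduct]
  rw [hfun]
  refine hsum.congr_fderiv (Eq.symm ?_)
  refine ContinuousLinearMap.ext fun v => ?_
  simp only [ContinuousLinearMap.smul_apply, dotCLM_apply, ContinuousLinearMap.sum_apply,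
    ContinuousLinearMap.add_apply, ContinuousLinearMap.proj_apply, smul_eq_mul]
  have e1 : ∑ i, (y₀ i * (A i ⬝ᵥ v) + (A *ᵥ y₀) i * v i)
      = y₀ ⬝ᵥ (A *ᵥ v) + (A *ᵥ y₀) ⬝ᵥ v := by
    rw [Finset.sum_add_distrib]
    congr 1
  have e2 : y₀ ⬝ᵥ (A *ᵥ v) = (A *ᵥ y₀) ⬝ᵥ v := by
    rw [dotProduct_mulVec]; conv_lhs => rw [← hA, Matrix.vecMul_transpose]
  rw [e1, e2]; ring

lemma inv_isSymm (V : Matrix (Fin d) (Fin d) ℝ) (hV : V.IsSymm) : (V⁻¹)ᵀ = V⁻¹ := by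
  rw [Matrix.transpose_nonsing_inv, hV.eq]

lemma hasFDerivAt_gaussPdf (V : Matrix (Fin d) (Fin d) ℝ) (hVsymm : V.IsSymm)
    (x m₀ : Fin d → ℝ) :
    HasFDerivAt (fun m => gaussPdf m V x)
      (gaussPdf m₀ V x • dotCLM (V⁻¹ *ᵥ (x - m₀))) m₀ := by
  set A := V⁻¹ with hAdef
  have hA : Aᵀ = A := inv_isSymm V hVsymm
  set K : ℝ := (2 * Real.pi) ^ (-(Fintype.card (Fin d) : ℝ) / 2) * V.det ^ (-(1 : ℝ) / 2)
    with hKdef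
  have hsub : HasFDerivAt (fun m : Fin d → ℝ => x - m)
      (-(ContinuousLinearMap.id ℝ (Fin d → ℝ))) m₀ := (hasFDerivAt_id m₀).const_sub x
  have hq : HasFDerivAt (fun m : Fin d → ℝ => (x - m) ⬝ᵥ A *ᵥ (x - m))
      (((2:ℝ) • dotCLM (A *ᵥ (x - m₀))).comp (-(ContinuousLinearMap.id ℝ (Fin d → ℝ)))) m₀ :=
    (hasFDerivAt_quad A hA (x - m₀)).comp m₀ hsub
  have hlin := hq.const_mul (-(1/2 : ℝ))
  have hexp := hlin.exp
  have hK := hexp.const_mul K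
  have hfun : (fun m : Fin d → ℝ => K * Real.exp (-(1/2 : ℝ) * ((x - m) ⬝ᵥ A *ᵥ (x - m))))
      = fun m => gaussPdf m V x := by
    funext m; simp [gaussPdf, hKdef, hAdef, mul_assoc]
  rw [hfun] at hK
  refine hK.congr_fderiv (Eq.symm ?_)
  refine ContinuousLinearMap.ext fun v => ?_
  simp only [ContinuousLinearMap.smul_apply, dotCLM_apply, ContinuousLinearMap.comp_apply,
    ContinuousLinearMap.neg_apply, ContinuousLinearMap.id_apply, smul_eq_mul,
    dotProduct_neg, gaussPdf]
  rw [hKdef, hAdef]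
  ring_nf

lemma continuous_quad (A : Matrix (Fin d) (Fin d) ℝ) :
    Continuous fun y : Fin d → ℝ => y ⬝ᵥ A *ᵥ y := by
  show Continuous fun y : Fin d → ℝ => ∑ i, y i * ∑ j, A i j * y j
  exact continuous_finset_sum _ fun i _ => (continuous_apply i).mul
    (continuous_finset_sum _ fun j _ => continuous_const.mul (continuous_apply j))

lemma continuous_gaussPdf (V : Matrix (Fin d) (Fin d) ℝ) (m : Fin d → ℝ) :
    Continuous fun x => gaussPdf m V x := by
  unfold gaussPdf
  exact continuous_const.mul (Real.continuous_exp.comp (continuous_const.mul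
    ((continuous_quad V⁻¹).comp (continuous_id.sub continuous_const))))

lemma quad_pos (A : Matrix (Fin d) (Fin d) ℝ) (hA : A.PosDef) {y : Fin d → ℝ} (hy : y ≠ 0) :
    0 < y ⬝ᵥ A *ᵥ y := by
  have := hA.re_dotProduct_pos (𝕜 := ℝ) hy
  simpa using this

lemma quad_nonneg (A : Matrix (Fin d) (Fin d) ℝ) (hA : A.PosDef) (y : Fin d → ℝ) :
    0 ≤ y ⬝ᵥ A *ᵥ y := by
  rcases eq_or_ne y 0 with rfl | hy
  · simp
  · exact (quad_pos A hA hy).le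

lemma exists_posdef_lower (A : Matrix (Fin d) (Fin d) ℝ) (hA : A.PosDef) :
    ∃ lam : ℝ, 0 < lam ∧ ∀ y : Fin d → ℝ, lam * ‖y‖ ^ 2 ≤ y ⬝ᵥ A *ᵥ y := by
  rcases Nat.eq_zero_or_pos d with hd | hd
  · refine ⟨1, one_pos, fun y => ?_⟩
    subst hd
    have hy0 : y = 0 := funext fun i => i.elim0
    rw [hy0, norm_zero]
    simp
  · haveI : Nontrivial (Fin d → ℝ) :=
      ⟨0, fun _ => 1, fun h => by simpa using congrFun h.symm ⟨0, hd⟩⟩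
    have hsne : (Metric.sphere (0 : Fin d → ℝ) 1).Nonempty :=
      NormedSpace.sphere_nonempty.2 zero_le_one
    obtain ⟨u, hu, hmin'⟩ := (isCompact_sphere (0 : Fin d → ℝ) 1).exists_isMinOn hsne
      (continuous_quad A).continuousOn
    have hmin : ∀ z ∈ Metric.sphere (0 : Fin d → ℝ) 1, u ⬝ᵥ A *ᵥ u ≤ z ⬝ᵥ A *ᵥ z :=
      fun z hz => hmin' hz
    have hu1 : ‖u‖ = 1 := by simpa using hu
    have hune : u ≠ 0 := by intro h; rw [h] at hu1; simp at hu1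
    refine ⟨u ⬝ᵥ A *ᵥ u, quad_pos A hA hune, fun y => ?_⟩
    rcases eq_or_ne y 0 with rfl | hy
    · simp
    · have hny : (0:ℝ) < ‖y‖ := norm_pos_iff.2 hy
      set u' : Fin d → ℝ := ‖y‖⁻¹ • y with hu'
      have hu'mem : u' ∈ Metric.sphere (0 : Fin d → ℝ) 1 := by
        simp [hu', norm_smul, abs_of_pos (inv_pos.2 hny), inv_mul_cancel₀ hny.ne']
      have hkey := hmin u' hu'mem
      have hexp : ‖y‖ ^ 2 * (u' ⬝ᵥ A *ᵥ u') = y ⬝ᵥ A *ᵥ y := by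
        rw [hu', smul_dotProduct, Matrix.mulVec_smul, dotProduct_smul,
          smul_eq_mul, smul_eq_mul]
        field_simp
      rw [← hexp]
      have h2 : (0:ℝ) ≤ ‖y‖ ^ 2 := sq_nonneg _
      nlinarith [hkey]

lemma gaussPdf_nonneg (V : Matrix (Fin d) (Fin d) ℝ) (hVpd : V.PosDef)
    (m x : Fin d → ℝ) : 0 ≤ gaussPdf m V x := by
  unfold gaussPdf
  have h1 : (0:ℝ) < 2 * Real.pi := by positivity
  have h2 : (0:ℝ) < V.det := hVpd.det_pos
  positivity

lemma integrable_expquad (c : ℝ) (hc : 0 < c) (μ : Fin d → ℝ) :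
    Integrable (fun x : Fin d → ℝ => Real.exp (-c * ‖x - μ‖ ^ 2)) := by
  have hc' : (0:ℝ) < c / (d + 1) := by positivity
  have hprod : Integrable
      (fun x : Fin d → ℝ => ∏ i, Real.exp (-(c / (d + 1)) * (x i) ^ 2)) :=
    Integrable.fintype_prod (f := fun (_ : Fin d) (t : ℝ) => Real.exp (-(c / (d + 1)) * t ^ 2))
      (fun _ => integrable_exp_neg_mul_sq hc')
  have hbase : Integrable (fun x : Fin d → ℝ => Real.exp (-c * ‖x‖ ^ 2)) := by
    refine hprod.mono' ?_ ?_
    · exact (Real.continuous_exp.comp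
        ((continuous_const.mul (continuous_norm.pow 2)))).aestronglyMeasurable
    · refine Filter.Eventually.of_forall fun x => ?_
      rw [Real.norm_eq_abs, abs_of_pos (Real.exp_pos _), ← Real.exp_sum]
      apply Real.exp_le_exp.2
      have hsum : ∑ i, (x i) ^ 2 ≤ (d + 1) * ‖x‖ ^ 2 := by
        calc ∑ i, (x i) ^ 2 ≤ ∑ _i : Fin d, ‖x‖ ^ 2 := by
              refine Finset.sum_le_sum fun i _ => ?_
              have := norm_le_pi_norm x i
              have h0 : (0:ℝ) ≤ ‖x i‖ := norm_nonneg _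
              calc (x i) ^ 2 = ‖x i‖ ^ 2 := by rw [Real.norm_eq_abs, sq_abs]
                _ ≤ ‖x‖ ^ 2 := by gcongr
          _ = d * ‖x‖ ^ 2 := by simp [Finset.sum_const, nsmul_eq_mul]
          _ ≤ (d + 1) * ‖x‖ ^ 2 := by nlinarith [sq_nonneg ‖x‖]
      have e : ∑ i, -(c / (d + 1)) * (x i) ^ 2 = -(c / (d + 1)) * ∑ i, (x i) ^ 2 := by
        rw [Finset.mul_sum]
      rw [e]
      have hd1 : (0:ℝ) < (d:ℝ) + 1 := by positivity
      have h3 : c / ((d:ℝ) + 1) * ∑ i, (x i) ^ 2 ≤ c * ‖x‖ ^ 2 := by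
        rw [div_mul_eq_mul_div, div_le_iff₀ hd1]
        nlinarith [hsum, hc.le]
      linarith
  simpa using hbase.comp_sub_right μ

lemma pi_norm_le_sum_abs (w : Fin d → ℝ) : ‖w‖ ≤ ∑ i, |w i| := by
  rcases Nat.eq_zero_or_pos d with hd | hd
  · subst hd
    have : w = 0 := funext fun i => i.elim0
    simp [this]
  · refine (pi_norm_le_iff_of_nonneg (Finset.sum_nonneg fun i _ => abs_nonneg _)).2 fun i => ?_
    rw [Real.norm_eq_abs]
    exact Finset.single_le_sum (fun j _ => abs_nonneg (w j)) (Finset.mem_univ i)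

lemma sum_abs_mulVec_le (A : Matrix (Fin d) (Fin d) ℝ) (y : Fin d → ℝ) :
    ∑ i, |(A *ᵥ y) i| ≤ (∑ i, ∑ j, |A i j|) * ‖y‖ := by
  rw [Finset.sum_mul]
  refine Finset.sum_le_sum fun i _ => ?_
  rw [Finset.sum_mul]
  calc |(A *ᵥ y) i| = |∑ j, A i j * y j| := by rfl
    _ ≤ ∑ j, |A i j * y j| := Finset.abs_sum_le_sum_abs _ _
    _ ≤ ∑ j, |A i j| * ‖y‖ := by
        refine Finset.sum_le_sum fun j _ => ?_
        rw [abs_mul]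
        have hy : |y j| ≤ ‖y‖ := (Real.norm_eq_abs (y j)) ▸ norm_le_pi_norm y j
        exact mul_le_mul_of_nonneg_left hy (abs_nonneg _)

lemma mul_exp_le (lam : ℝ) (hlam : 0 < lam) (t : ℝ) (ht : 0 ≤ t) :
    t * Real.exp (-(lam / 4) * t ^ 2) ≤ max 1 (4 / lam) := by
  rcases le_or_gt t 1 with h1 | h1
  · have : Real.exp (-(lam / 4) * t ^ 2) ≤ 1 := by
      rw [Real.exp_le_one_iff]
      nlinarith [sq_nonneg t]
    calc t * Real.exp (-(lam / 4) * t ^ 2) ≤ 1 * 1 := by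
          apply mul_le_mul h1 this (Real.exp_pos _).le zero_le_one
      _ ≤ max 1 (4 / lam) := by simp
  · have hexp : lam / 4 * t ^ 2 ≤ Real.exp (lam / 4 * t ^ 2) := by
      linarith [Real.add_one_le_exp (lam / 4 * t ^ 2)]
    have ht2 : (0:ℝ) < lam / 4 * t ^ 2 := by positivity
    have : Real.exp (-(lam / 4) * t ^ 2) ≤ (lam / 4 * t ^ 2)⁻¹ := by
      rw [neg_mul, Real.exp_neg]
      exact inv_anti₀ ht2 hexp
    calc t * Real.exp (-(lam / 4) * t ^ 2) ≤ t * (lam / 4 * t ^ 2)⁻¹ := by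
          apply mul_le_mul_of_nonneg_left this ht
      _ = 4 / (lam * t) := by field_simp
      _ ≤ 4 / lam := by
          apply div_le_div_of_nonneg_left (by norm_num) (by positivity)
          nlinarith
      _ ≤ max 1 (4 / lam) := le_max_right _ _

open scoped Topology

set_option maxHeartbeats 1000000 in
lemma main_step (f : (Fin d → ℝ) → ℝ) (hf : Measurable f) (Cb : ℝ) (hfb : ∀ x, |f x| ≤ Cb)
    (V : Matrix (Fin d) (Fin d) ℝ) (hVsymm : V.IsSymm) (hVpd : V.PosDef) (μ : Fin d → ℝ) :
    HasFDerivAt (fun m => ∫ x, f x * gaussPdf m V x)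
      (∫ x, (f x * gaussPdf μ V x) • dotCLM (V⁻¹ *ᵥ (x - μ))) μ ∧
    Integrable (fun x => (f x * gaussPdf μ V x) • dotCLM (V⁻¹ *ᵥ (x - μ))) volume ∧
    Integrable (fun x => (f x * gaussPdf μ V x) • (V⁻¹ *ᵥ (x - μ))) volume := by
  have hApd : (V⁻¹).PosDef := hVpd.inv
  obtain ⟨lam, hlam, hQlb⟩ := exists_posdef_lower V⁻¹ hApd
  set A := V⁻¹ with hAdef
  set K : ℝ := (2 * Real.pi) ^ (-(Fintype.card (Fin d) : ℝ) / 2) * V.det ^ (-(1 : ℝ) / 2)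
    with hKdef
  have hKpos : 0 < K := by
    have h1 : (0:ℝ) < 2 * Real.pi := by positivity
    have h2 : (0:ℝ) < V.det := hVpd.det_pos
    positivity
  set q : (Fin d → ℝ) → (Fin d → ℝ) → ℝ := fun m x => (x - m) ⬝ᵥ A *ᵥ (x - m) with hqdef
  have hpdf : ∀ m x, gaussPdf m V x = K * Real.exp (-(1/2 : ℝ) * q m x) := by
    intro m x
    simp only [hqdef, hKdef, gaussPdf, hAdef]
  have hq_nonneg : ∀ m x, 0 ≤ q m x := fun m x => quad_nonneg A hApd _
  have hqlb : ∀ m x, lam * ‖x - m‖ ^ 2 ≤ q m x := fun m x => hQlb _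
  set CA : ℝ := ∑ i, ∑ j, |A i j| with hCAdef
  have hCA0 : 0 ≤ CA := Finset.sum_nonneg fun i _ => Finset.sum_nonneg fun j _ => abs_nonneg _
  set Ct : ℝ := max 1 (4 / lam) with hCtdef
  have hCt0 : (0:ℝ) < Ct := lt_of_lt_of_le one_pos (le_max_left _ _)
  have hCb0 : 0 ≤ Cb := le_trans (abs_nonneg _) (hfb 0)
  -- exp bound on the ball
  have hball : ∀ m ∈ Metric.ball μ 1, ∀ x : Fin d → ℝ,
      Real.exp (-(1/4 : ℝ) * q m x) ≤ Real.exp (lam/4) * Real.exp (-(lam/8) * ‖x - μ‖ ^ 2) := by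
    intro m hm x
    rw [← Real.exp_add]
    apply Real.exp_le_exp.2
    have h2 : ‖m - μ‖ < 1 := by
      rw [Metric.mem_ball, dist_eq_norm] at hm; exact hm
    have h3 : ‖x - μ‖ ≤ ‖x - m‖ + ‖m - μ‖ := by
      calc ‖x - μ‖ = ‖(x - m) + (m - μ)‖ := by congr 1; abel
        _ ≤ ‖x - m‖ + ‖m - μ‖ := norm_add_le _ _
    have h4 : ‖x - μ‖ ^ 2 / 2 - 1 ≤ ‖x - m‖ ^ 2 := by
      nlinarith [norm_nonneg (x - m), norm_nonneg (x - μ), sq_nonneg (‖x - μ‖ - 2),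
        sq_nonneg (‖x - m‖ - ‖x - μ‖ + 1)]
    have h5 := hqlb m x
    have h6 : lam * (‖x - μ‖ ^ 2 / 2 - 1) ≤ lam * ‖x - m‖ ^ 2 :=
      mul_le_mul_of_nonneg_left h4 hlam.le
    linarith
  -- pointwise core bound
  set bound : (Fin d → ℝ) → ℝ :=
    fun x => (Cb * K * CA * Ct * Real.exp (lam/4)) * Real.exp (-(lam/8) * ‖x - μ‖ ^ 2)
    with hbounddef
  have hbound_int : Integrable bound volume :=
    (integrable_expquad (lam/8) (by positivity) μ).const_mul _
  have hcore : ∀ m ∈ Metric.ball μ 1, ∀ x : Fin d → ℝ,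
      |f x * gaussPdf m V x| * (∑ i, |(A *ᵥ (x - m)) i|) ≤ bound x := by
    intro m hm x
    have hpn : 0 ≤ gaussPdf m V x := gaussPdf_nonneg V hVpd m x
    have hb1 : |f x * gaussPdf m V x| ≤ Cb * gaussPdf m V x := by
      rw [abs_mul, abs_of_nonneg hpn]
      exact mul_le_mul_of_nonneg_right (hfb x) hpn
    have hb2 : ∑ i, |(A *ᵥ (x - m)) i| ≤ CA * ‖x - m‖ := sum_abs_mulVec_le A _
    have hE4N : Real.exp (-(1/4 : ℝ) * q m x) * ‖x - m‖ ≤ Ct := by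
      have hmono : Real.exp (-(1/4 : ℝ) * q m x) ≤ Real.exp (-(lam/4) * ‖x - m‖ ^ 2) := by
        apply Real.exp_le_exp.2
        have := hqlb m x
        linarith
      calc Real.exp (-(1/4 : ℝ) * q m x) * ‖x - m‖
          ≤ Real.exp (-(lam/4) * ‖x - m‖ ^ 2) * ‖x - m‖ :=
            mul_le_mul_of_nonneg_right hmono (norm_nonneg _)
        _ = ‖x - m‖ * Real.exp (-(lam/4) * ‖x - m‖ ^ 2) := mul_comm _ _
        _ ≤ Ct := mul_exp_le lam hlam _ (norm_nonneg _)
    have hsplit : Real.exp (-(1/2 : ℝ) * q m x)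
        = Real.exp (-(1/4 : ℝ) * q m x) * Real.exp (-(1/4 : ℝ) * q m x) := by
      rw [← Real.exp_add]; ring_nf
    have hE4pos : 0 < Real.exp (-(1/4 : ℝ) * q m x) := Real.exp_pos _
    calc |f x * gaussPdf m V x| * (∑ i, |(A *ᵥ (x - m)) i|)
        ≤ (Cb * gaussPdf m V x) * (CA * ‖x - m‖) := by
          apply mul_le_mul hb1 hb2 (Finset.sum_nonneg fun i _ => abs_nonneg _)
          positivity
      _ = (Cb * CA * K) * (Real.exp (-(1/4 : ℝ) * q m x)
            * (Real.exp (-(1/4 : ℝ) * q m x) * ‖x - m‖)) := by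
          rw [hpdf, hsplit]; ring
      _ ≤ (Cb * CA * K) * (Real.exp (-(1/4 : ℝ) * q m x) * Ct) := by
          apply mul_le_mul_of_nonneg_left _ (by positivity)
          exact mul_le_mul_of_nonneg_left hE4N hE4pos.le
      _ ≤ (Cb * CA * K) * ((Real.exp (lam/4) * Real.exp (-(lam/8) * ‖x - μ‖ ^ 2)) * Ct) := by
          apply mul_le_mul_of_nonneg_left _ (by positivity)
          exact mul_le_mul_of_nonneg_right (hball m hm x) hCt0.le
      _ = bound x := by rw [hbounddef]; ring
  -- measurability facts
  have hmulVec_cont : ∀ m : Fin d → ℝ, Continuous fun x : Fin d → ℝ => A *ᵥ (x - m) := by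
    intro m
    refine continuous_pi fun i => ?_
    show Continuous fun x : Fin d → ℝ => ∑ j, A i j * (x j - m j)
    exact continuous_finset_sum _ fun j _ =>
      continuous_const.mul ((continuous_apply j).sub continuous_const)
  have hFmeas : ∀ m : Fin d → ℝ,
      AEStronglyMeasurable (fun x => f x * gaussPdf m V x) volume :=
    fun m => (hf.mul (continuous_gaussPdf V m).measurable).aestronglyMeasurable
  have hF'meas : AEStronglyMeasurable
      (fun x => (f x * gaussPdf μ V x) • dotCLM (A *ᵥ (x - μ))) volume :=
    (hFmeas μ).smul ((continuous_dotCLM.comp (hmulVec_cont μ)).aestronglyMeasurable)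
  -- integrability of F μ
  have hFint : Integrable (fun x => f x * gaussPdf μ V x) volume := by
    have hbint : Integrable
        (fun x : Fin d → ℝ => (Cb * K * Real.exp (lam/4)) * Real.exp (-(lam/8) * ‖x - μ‖ ^ 2))
        volume := (integrable_expquad (lam/8) (by positivity) μ).const_mul _
    refine hbint.mono' (hFmeas μ) (Filter.Eventually.of_forall fun x => ?_)
    have hpn : 0 ≤ gaussPdf μ V x := gaussPdf_nonneg V hVpd μ x
    have hmono : Real.exp (-(1/2 : ℝ) * q μ x) ≤ Real.exp (-(1/4 : ℝ) * q μ x) := by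
      apply Real.exp_le_exp.2
      have := hq_nonneg μ x
      linarith
    have hb := hball μ (Metric.mem_ball_self one_pos) x
    rw [Real.norm_eq_abs, abs_mul, abs_of_nonneg hpn]
    calc |f x| * gaussPdf μ V x ≤ Cb * gaussPdf μ V x :=
          mul_le_mul_of_nonneg_right (hfb x) hpn
      _ = Cb * K * Real.exp (-(1/2 : ℝ) * q μ x) := by rw [hpdf]; ring
      _ ≤ Cb * K * Real.exp (-(1/4 : ℝ) * q μ x) := by
          apply mul_le_mul_of_nonneg_left hmono (by positivity)
      _ ≤ Cb * K * (Real.exp (lam/4) * Real.exp (-(lam/8) * ‖x - μ‖ ^ 2)) := by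
          apply mul_le_mul_of_nonneg_left hb (by positivity)
      _ = (Cb * K * Real.exp (lam/4)) * Real.exp (-(lam/8) * ‖x - μ‖ ^ 2) := by ring
  -- the two integrability claims
  have hIntCLM : Integrable (fun x => (f x * gaussPdf μ V x) • dotCLM (A *ᵥ (x - μ))) volume := by
    refine hbound_int.mono' hF'meas (Filter.Eventually.of_forall fun x => ?_)
    refine le_trans (ContinuousLinearMap.opNorm_smul_le _ _) ?_
    calc ‖f x * gaussPdf μ V x‖ * ‖dotCLM (A *ᵥ (x - μ))‖
        ≤ |f x * gaussPdf μ V x| * (∑ i, |(A *ᵥ (x - μ)) i|) := by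
          rw [Real.norm_eq_abs]
          exact mul_le_mul_of_nonneg_left (norm_dotCLM_le _) (abs_nonneg _)
      _ ≤ bound x := hcore μ (Metric.mem_ball_self one_pos) x
  have hIntVec : Integrable (fun x => (f x * gaussPdf μ V x) • (A *ᵥ (x - μ))) volume := by
    have hmeasv : AEStronglyMeasurable
        (fun x => (f x * gaussPdf μ V x) • (A *ᵥ (x - μ))) volume :=
      (hFmeas μ).smul (hmulVec_cont μ).aestronglyMeasurable
    refine hbound_int.mono' hmeasv (Filter.Eventually.of_forall fun x => ?_)
    rw [norm_smul]
    calc ‖f x * gaussPdf μ V x‖ * ‖A *ᵥ (x - μ)‖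
        ≤ |f x * gaussPdf μ V x| * (∑ i, |(A *ᵥ (x - μ)) i|) := by
          rw [Real.norm_eq_abs]
          exact mul_le_mul_of_nonneg_left (pi_norm_le_sum_abs _) (abs_nonneg _)
      _ ≤ bound x := hcore μ (Metric.mem_ball_self one_pos) x
  -- differentiation under the integral
  have hMain : HasFDerivAt (fun m => ∫ x, f x * gaussPdf m V x)
      (∫ x, (f x * gaussPdf μ V x) • dotCLM (A *ᵥ (x - μ))) μ := by
    apply hasFDerivAt_integral_of_dominated_of_fderiv_le
      (F' := fun m x => (f x * gaussPdf m V x) • dotCLM (A *ᵥ (x - m)))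
      (bound := bound) (Metric.ball_mem_nhds μ one_pos)
      (Filter.Eventually.of_forall fun m => hFmeas m) hFint hF'meas
      (Filter.Eventually.of_forall fun x m hm => ?_) hbound_int
      (Filter.Eventually.of_forall fun x m hm => ?_)
    · refine le_trans (ContinuousLinearMap.opNorm_smul_le _ _) ?_
      calc ‖f x * gaussPdf m V x‖ * ‖dotCLM (A *ᵥ (x - m))‖
          ≤ |f x * gaussPdf m V x| * (∑ i, |(A *ᵥ (x - m)) i|) := by
            rw [Real.norm_eq_abs]
            exact mul_le_mul_of_nonneg_left (norm_dotCLM_le _) (abs_nonneg _)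
        _ ≤ bound x := hcore m hm x
    · have h := (hasFDerivAt_gaussPdf V hVsymm x m).const_mul (f x)
      have : f x • (gaussPdf m V x • dotCLM (A *ᵥ (x - m)))
          = (f x * gaussPdf m V x) • dotCLM (A *ᵥ (x - m)) := smul_smul _ _ _
      rw [this] at h
      exact h
  exact ⟨hMain, hIntCLM, hIntVec⟩

lemma integral_gaussMeasure {G : Type*} [NormedAddCommGroup G] [NormedSpace ℝ G]
    (m : Fin d → ℝ) (V : Matrix (Fin d) (Fin d) ℝ) (hVpd : V.PosDef)
    (g : (Fin d → ℝ) → G) :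
    ∫ x, g x ∂(gaussMeasure m V) = ∫ x, gaussPdf m V x • g x := by
  rw [gaussMeasure]
  have hmeas : Measurable fun x => Real.toNNReal (gaussPdf m V x) :=
    (continuous_gaussPdf V m).measurable.real_toNNReal
  rw [show (fun x => ENNReal.ofReal (gaussPdf m V x))
      = fun x => ((Real.toNNReal (gaussPdf m V x) : ℝ≥0) : ℝ≥0∞) from rfl]
  rw [integral_withDensity_eq_integral_smul hmeas]
  congr 1
  funext x
  rw [NNReal.smul_def, Real.coe_toNNReal _ (gaussPdf_nonneg V hVpd m x)]

/-- **Score-function gradient identity (Eq. (17) of the paper).**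
For bounded measurable `f`, the map `μ ↦ E_{N(μ,V)}[f]` is differentiable and
its gradient is `∫ f(x) V⁻¹ (x − μ) dN(μ,V)(x)`, i.e. the derivative in any
direction `v` is the dot product of this integral with `v`. -/
theorem gaussian_mean_score_gradient
    {d : ℕ}
    (f : (Fin d → ℝ) → ℝ) (hf : Measurable f) (hfb : ∃ Cb : ℝ, ∀ x, |f x| ≤ Cb)
    (V : Matrix (Fin d) (Fin d) ℝ) (hVsymm : V.IsSymm) (hVpd : V.PosDef) :
    Differentiable ℝ (fun m : Fin d → ℝ => ∫ x, f x ∂(gaussMeasure m V)) ∧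
      ∀ (μ v : Fin d → ℝ),
        fderiv ℝ (fun m : Fin d → ℝ => ∫ x, f x ∂(gaussMeasure m V)) μ v =
          (∫ x, f x • (V⁻¹ *ᵥ (x - μ)) ∂(gaussMeasure μ V)) ⬝ᵥ v := by
  obtain ⟨Cb, hfb⟩ := hfb
  have hrw : (fun m : Fin d → ℝ => ∫ x, f x ∂(gaussMeasure m V))
      = fun m => ∫ x, f x * gaussPdf m V x := by
    funext m
    rw [integral_gaussMeasure m V hVpd]
    congr 1; funext x; rw [smul_eq_mul, mul_comm]
  have hstep := fun μ : Fin d → ℝ => main_step f hf Cb hfb V hVsymm hVpd μ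
  constructor
  · rw [hrw]; exact fun μ => ((hstep μ).1).differentiableAt
  · intro μ v
    rw [hrw]
    have h1 := (hstep μ).1
    have hIntVec := (hstep μ).2.2
    rw [h1.fderiv, ContinuousLinearMap.integral_apply (hstep μ).2.1 v, integral_gaussMeasure μ V hVpd]
    have hsm : (fun x => gaussPdf μ V x • f x • (V⁻¹ *ᵥ (x - μ)))
        = fun x => (f x * gaussPdf μ V x) • (V⁻¹ *ᵥ (x - μ)) := by
      funext x; rw [smul_smul, mul_comm]
    rw [hsm]
    set I := ∫ x, (f x * gaussPdf μ V x) • (V⁻¹ *ᵥ (x - μ)) with hI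
    have hcompInt : ∀ i : Fin d,
        Integrable (fun x => (f x * gaussPdf μ V x) * (V⁻¹ *ᵥ (x - μ)) i) volume := by
      intro i
      have h := (ContinuousLinearMap.proj (R := ℝ) (φ := fun _ : Fin d => ℝ) i).integrable_comp
        hIntVec
      simpa [smul_eq_mul] using h
    have hcomp : ∀ i : Fin d, I i = ∫ x, (f x * gaussPdf μ V x) * (V⁻¹ *ᵥ (x - μ)) i := by
      intro i
      have h := (ContinuousLinearMap.proj (R := ℝ) (φ := fun _ : Fin d => ℝ) i).integral_comp_comm
        hIntVec
      have h2 : (ContinuousLinearMap.proj (R := ℝ) (φ := fun _ : Fin d => ℝ) i) I = I i := rfl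
      rw [← hI] at h
      rw [← h2, ← h]
      congr 1
    calc ∫ x, ((f x * gaussPdf μ V x) • dotCLM (V⁻¹ *ᵥ (x - μ))) v
        = ∫ x, ∑ i, ((f x * gaussPdf μ V x) * (V⁻¹ *ᵥ (x - μ)) i) * v i := by
          congr 1; funext x
          simp only [ContinuousLinearMap.smul_apply, dotCLM_apply, smul_eq_mul, dotProduct,
            Finset.mul_sum]
          exact Finset.sum_congr rfl fun i _ => by ring
      _ = ∑ i, ∫ x, ((f x * gaussPdf μ V x) * (V⁻¹ *ᵥ (x - μ)) i) * v i :=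
          integral_finset_sum _ (fun i _ => (hcompInt i).mul_const _)
      _ = ∑ i, I i * v i := by
          refine Finset.sum_congr rfl fun i _ => ?_
          rw [hcomp i, ← integral_mul_const]
      _ = I ⬝ᵥ v := by simp [dotProduct]
end

section
/- Let p be a probability measure on ℝ^d with finite second moments, mean m ∈ ℝ^d, and symmetric positive definite covariance matrix S, and suppose p is absolutely continuous with respect to Lebesgue measure. Then for every μ ∈ ℝ^d and every symmetric positive definite d×d matrix Σ, the Kullback-Leibler divergence satisfies KL(p ‖ N(m, S)) ≤ KL(p ‖ N(μ, Σ)); that is, among all multivariate Gaussians q, the reverse KL divergence KL(p ‖ q) is minimized by matching the mean and covariance of q to those of p. -/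
open MeasureTheory Matrix
open scoped Classical

/-- Kullback-Leibler divergence `KL(p‖q) = ∫ log (dp/dq) dp`, equal to `⊤`
when `p` is not absolutely continuous w.r.t. `q` (or the log-likelihood
ratio is not integrable). -/
noncomputable def klDiv {α : Type*} [MeasurableSpace α] (p q : Measure α) : EReal :=
  if p ≪ q ∧ Integrable (llr p q) p then ((∫ x, llr p q x ∂p : ℝ) : EReal) else ⊤

/-! ### Auxiliary matrix lemmas -/

lemma MM.trace_eq_sum_eigenvalues {n : Type*} [Fintype n] [DecidableEq n]
    {A : Matrix n n ℝ} (hA : A.IsHermitian) :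
    A.trace = ∑ i, hA.eigenvalues i := by
  conv_lhs => rw [hA.spectral_theorem, Unitary.conjStarAlgAut_apply]
  rw [trace_mul_cycle]
  have h1 : (star (hA.eigenvectorUnitary : Matrix n n ℝ)) *
      (hA.eigenvectorUnitary : Matrix n n ℝ) = 1 :=
    mem_unitaryGroup_iff'.mp (hA.eigenvectorUnitary).2
  rw [h1, one_mul, trace_diagonal]
  simp

lemma MM.log_det_le_trace_sub_card {n : Type*} [Fintype n] [DecidableEq n]
    {B : Matrix n n ℝ} (hB : B.PosSemidef) (hdet : 0 < B.det) :
    Real.log B.det ≤ B.trace - (Fintype.card n : ℝ) := by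
  have hdeteq : B.det = ∏ i, hB.isHermitian.eigenvalues i := by
    simpa using hB.isHermitian.det_eq_prod_eigenvalues
  have hne : ∀ i ∈ Finset.univ (α := n), hB.isHermitian.eigenvalues i ≠ 0 := by
    rw [← Finset.prod_ne_zero_iff]
    rw [hdeteq] at hdet; exact hdet.ne'
  have hpos : ∀ i, 0 < hB.isHermitian.eigenvalues i := fun i =>
    lt_of_le_of_ne (hB.eigenvalues_nonneg i) (Ne.symm (hne i (Finset.mem_univ i)))
  rw [hdeteq, Real.log_prod (fun i _ => (hpos i).ne'),
    MM.trace_eq_sum_eigenvalues hB.isHermitian]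
  calc ∑ i, Real.log (hB.isHermitian.eigenvalues i)
      ≤ ∑ i, (hB.isHermitian.eigenvalues i - 1) :=
        Finset.sum_le_sum fun i _ => Real.log_le_sub_one_of_pos (hpos i)
    _ = (∑ i, hB.isHermitian.eigenvalues i) - Fintype.card n := by
        rw [Finset.sum_sub_distrib]; simp [Finset.card_univ]

lemma MM.key_matrix_ineq {n : Type*} [Fintype n] [DecidableEq n]
    {S V : Matrix n n ℝ} (hS : S.PosDef) (hV : V.PosDef) :
    Real.log S.det + (Fintype.card n : ℝ) ≤ Real.log V.det + (V⁻¹ * S).trace := by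
  open scoped MatrixOrder in set R := CFC.sqrt S with hR
  open scoped MatrixOrder in have hRh : R.IsHermitian := (CFC.sqrt_nonneg S).posSemidef.1
  open scoped MatrixOrder in have hRR : R * R = S := CFC.sqrt_mul_sqrt_self S hS.posSemidef.nonneg
  have hBpsd : (R * V⁻¹ * R).PosSemidef := by
    have := (hV.inv.posSemidef).mul_mul_conjTranspose_same R
    rwa [hRh.eq] at this
  have hRdet : R.det * R.det = S.det := by rw [← det_mul, hRR]
  have hdetB : (R * V⁻¹ * R).det = S.det * V.det⁻¹ := by
    rw [det_mul, det_mul, det_nonsing_inv, Ring.inverse_eq_inv]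
    rw [mul_comm R.det V.det⁻¹, mul_assoc, hRdet, mul_comm]
  have hdetBpos : 0 < (R * V⁻¹ * R).det := by
    rw [hdetB]; exact mul_pos hS.det_pos (inv_pos.mpr hV.det_pos)
  have htrB : (R * V⁻¹ * R).trace = (V⁻¹ * S).trace := by
    rw [trace_mul_cycle, hRR, trace_mul_comm]
  have := MM.log_det_le_trace_sub_card hBpsd hdetBpos
  rw [hdetB, htrB, Real.log_mul hS.det_pos.ne' (inv_pos.mpr hV.det_pos).ne',
    Real.log_inv] at this
  linarith

/-! ### Auxiliary lemmas about the Gaussian density -/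

section GaussAux

variable {ι : Type*} [Fintype ι] [DecidableEq ι]

lemma MM.gaussPdf_pos (a : ι → ℝ) {C : Matrix ι ι ℝ} (hC : C.PosDef) (x : ι → ℝ) :
    0 < gaussPdf a C x := by
  unfold gaussPdf
  have h1 : (0:ℝ) < (2 * Real.pi) ^ (-(Fintype.card ι : ℝ) / 2) :=
    Real.rpow_pos_of_pos (by positivity) _
  have h2 : (0:ℝ) < C.det ^ (-(1:ℝ) / 2) := Real.rpow_pos_of_pos hC.det_pos _
  exact mul_pos (mul_pos h1 h2) (Real.exp_pos _)

lemma MM.measurable_quad (a : ι → ℝ) (C : Matrix ι ι ℝ) :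
    Measurable (fun x : ι → ℝ => (x - a) ⬝ᵥ (C⁻¹ *ᵥ (x - a))) := by
  simp only [dotProduct, mulVec]
  exact Finset.measurable_sum _ fun i _ =>
    (((measurable_pi_apply i).sub measurable_const)).mul
      (Finset.measurable_sum _ fun j _ =>
        (measurable_const.mul ((measurable_pi_apply j).sub measurable_const)))

lemma MM.measurable_gaussPdf (a : ι → ℝ) (C : Matrix ι ι ℝ) :
    Measurable (gaussPdf a C) := by
  unfold gaussPdf
  exact measurable_const.mul ((MM.measurable_quad a C).const_mul _).exp

lemma MM.log_gaussPdf {C : Matrix ι ι ℝ} (hC : C.PosDef) (a : ι → ℝ) (x : ι → ℝ) :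
    Real.log (gaussPdf a C x) = (-(Fintype.card ι : ℝ) / 2) * Real.log (2 * Real.pi)
      + (-1 / 2) * Real.log C.det + (-(1 / 2) * ((x - a) ⬝ᵥ (C⁻¹ *ᵥ (x - a)))) := by
  unfold gaussPdf
  have h1 : (0:ℝ) < (2 * Real.pi) ^ (-(Fintype.card ι : ℝ) / 2) :=
    Real.rpow_pos_of_pos (by positivity) _
  have h2 : (0:ℝ) < C.det ^ (-(1:ℝ) / 2) := Real.rpow_pos_of_pos hC.det_pos _
  rw [Real.log_mul (mul_pos h1 h2).ne' (Real.exp_ne_zero _), Real.log_mul h1.ne' h2.ne',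
    Real.log_exp, Real.log_rpow (by positivity), Real.log_rpow hC.det_pos]

lemma MM.gaussMeasure_ac (a : ι → ℝ) {C : Matrix ι ι ℝ} (hC : C.PosDef) :
    (volume : Measure (ι → ℝ)) ≪ gaussMeasure a C :=
  withDensity_absolutelyContinuous' (MM.measurable_gaussPdf a C).ennreal_ofReal.aemeasurable
    (Filter.Eventually.of_forall fun x => by
      simp [ENNReal.ofReal_eq_zero, not_le, MM.gaussPdf_pos a hC x])

lemma MM.llr_gauss_eq (p : Measure (ι → ℝ)) [SigmaFinite p]
    (hac : p ≪ (volume : Measure (ι → ℝ)))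
    (a : ι → ℝ) {C : Matrix ι ι ℝ} (hC : C.PosDef) :
    llr p (gaussMeasure a C) =ᵐ[p]
      fun x => llr p volume x - Real.log (gaussPdf a C x) := by
  have hf : AEMeasurable (fun x => ENNReal.ofReal (gaussPdf a C x))
      (volume : Measure (ι → ℝ)) :=
    (MM.measurable_gaussPdf a C).ennreal_ofReal.aemeasurable
  have h := Measure.rnDeriv_withDensity_right p (volume : Measure (ι → ℝ)) hf
    (Filter.Eventually.of_forall fun x => by
      simp [ENNReal.ofReal_eq_zero, not_le, MM.gaussPdf_pos a hC x])
    (Filter.Eventually.of_forall fun x => ENNReal.ofReal_ne_top)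
  filter_upwards [hac.ae_le h, Measure.rnDeriv_pos hac,
    hac.ae_le (Measure.rnDeriv_lt_top p volume)] with x hx hpos hlt
  rw [llr, llr, gaussMeasure] at *
  rw [hx, ENNReal.toReal_mul, ENNReal.toReal_inv, ENNReal.toReal_ofReal
    (MM.gaussPdf_pos a hC x).le, Real.log_mul (inv_ne_zero (MM.gaussPdf_pos a hC x).ne')
      (ENNReal.toReal_pos hpos.ne' hlt.ne).ne', Real.log_inv]
  ring

end GaussAux

/-! ### Auxiliary integral lemmas -/

section IntAux

variable {d : ℕ} (p : Measure (Fin d → ℝ)) [IsProbabilityMeasure p]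
  (hmom2 : ∀ i j : Fin d, Integrable (fun x => x i * x j) p)
  (m : Fin d → ℝ) (hm : ∀ i, ∫ x, x i ∂p = m i)
  (S : Matrix (Fin d) (Fin d) ℝ)
  (hS : ∀ i j, ∫ x, (x i - m i) * (x j - m j) ∂p = S i j)

include hmom2 in
lemma MM.int_coord (i : Fin d) : Integrable (fun x => x i) p := by
  refine Integrable.mono' ((integrable_const (1:ℝ)).add (hmom2 i i))
    (measurable_pi_apply i).aestronglyMeasurable
    (Filter.Eventually.of_forall fun x => ?_)
  have : |x i| ≤ 1 + x i * x i := by nlinarith [sq_nonneg (|x i| - 1), sq_abs (x i)]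
  simpa [Real.norm_eq_abs] using this

include hmom2 in
lemma MM.int_cross (a : Fin d → ℝ) (i j : Fin d) :
    Integrable (fun x => (x i - a i) * (x j - a j)) p := by
  have : (fun x : Fin d → ℝ => (x i - a i) * (x j - a j))
      = fun x => x i * x j - a j * x i - a i * x j + a i * a j := by
    funext x; ring
  rw [this]
  exact (((hmom2 i j).sub ((MM.int_coord p hmom2 i).const_mul (a j))).sub
    ((MM.int_coord p hmom2 j).const_mul (a i))).add (integrable_const _)

include hmom2 hm hS in
lemma MM.integral_cross (a : Fin d → ℝ) (i j : Fin d) :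
    ∫ x, (x i - a i) * (x j - a j) ∂p = S i j + (m i - a i) * (m j - a j) := by
  have expand : ∀ b : Fin d → ℝ, ∫ x, (x i - b i) * (x j - b j) ∂p
      = (∫ x, x i * x j ∂p) - b j * m i - b i * m j + b i * b j := by
    intro b
    have : (fun x : Fin d → ℝ => (x i - b i) * (x j - b j))
        = fun x => x i * x j - b j * x i - b i * x j + b i * b j := by
      funext x; ring
    rw [this]
    have h1 : Integrable (fun x : Fin d → ℝ => b j * x i) p :=
      (MM.int_coord p hmom2 i).const_mul (b j)
    have h2 : Integrable (fun x : Fin d → ℝ => b i * x j) p :=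
      (MM.int_coord p hmom2 j).const_mul (b i)
    have h3 : Integrable (fun x : Fin d → ℝ => x i * x j - b j * x i) p :=
      (hmom2 i j).sub h1
    have h4 : Integrable (fun x : Fin d → ℝ => x i * x j - b j * x i - b i * x j) p :=
      h3.sub h2
    rw [integral_add h4 (integrable_const _), integral_sub h3 h2, integral_sub (hmom2 i j) h1,
      integral_const_mul, integral_const_mul, hm i, hm j, integral_const]
    simp
  have e1 := expand a
  have e2 := expand m
  rw [hS i j] at e2
  rw [e1]
  nlinarith [e2]

include hmom2 in
lemma MM.int_quad (a : Fin d → ℝ) (C : Matrix (Fin d) (Fin d) ℝ) :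
    Integrable (fun x : Fin d → ℝ => (x - a) ⬝ᵥ (C⁻¹ *ᵥ (x - a))) p := by
  have : (fun x : Fin d → ℝ => (x - a) ⬝ᵥ (C⁻¹ *ᵥ (x - a)))
      = fun x => ∑ i, ∑ j, C⁻¹ i j * ((x i - a i) * (x j - a j)) := by
    funext x
    simp only [dotProduct, mulVec, Pi.sub_apply, Finset.mul_sum]
    exact Finset.sum_congr rfl fun i _ => Finset.sum_congr rfl fun j _ => by ring
  rw [this]
  exact integrable_finset_sum _ fun i _ => integrable_finset_sum _ fun j _ =>
    (MM.int_cross p hmom2 a i j).const_mul _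

include hmom2 hm hS in
lemma MM.integral_quad (hSsymm : S.IsSymm) (a : Fin d → ℝ) (C : Matrix (Fin d) (Fin d) ℝ) :
    ∫ x, (x - a) ⬝ᵥ (C⁻¹ *ᵥ (x - a)) ∂p
      = (C⁻¹ * S).trace + (m - a) ⬝ᵥ (C⁻¹ *ᵥ (m - a)) := by
  have heq : (fun x : Fin d → ℝ => (x - a) ⬝ᵥ (C⁻¹ *ᵥ (x - a)))
      = fun x => ∑ i, ∑ j, C⁻¹ i j * ((x i - a i) * (x j - a j)) := by
    funext x
    simp only [dotProduct, mulVec, Pi.sub_apply, Finset.mul_sum]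
    exact Finset.sum_congr rfl fun i _ => Finset.sum_congr rfl fun j _ => by ring
  rw [heq, integral_finset_sum _ fun i _ => integrable_finset_sum _ fun j _ =>
    (MM.int_cross p hmom2 a i j).const_mul (C⁻¹ i j)]
  have : ∀ i, ∫ x, ∑ j, C⁻¹ i j * ((x i - a i) * (x j - a j)) ∂p
      = ∑ j, C⁻¹ i j * (S i j + (m i - a i) * (m j - a j)) := by
    intro i
    rw [integral_finset_sum _ fun j _ => (MM.int_cross p hmom2 a i j).const_mul _]
    exact Finset.sum_congr rfl fun j _ => by
      rw [integral_const_mul, MM.integral_cross p hmom2 m hm S hS a i j]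
  simp_rw [this, mul_add, Finset.sum_add_distrib]
  congr 1
  · rw [trace]
    simp only [diag_apply, mul_apply]
    exact (Finset.sum_congr rfl fun i _ => Finset.sum_congr rfl fun j _ => by
      rw [hSsymm.apply i j]).symm
  · simp only [dotProduct, mulVec, Pi.sub_apply, Finset.mul_sum]
    exact (Finset.sum_congr rfl fun i _ => Finset.sum_congr rfl fun j _ => by ring).symm

end IntAux

/-- **Moment matching minimizes the reverse KL divergence (Eq. (25)).**
Among all multivariate Gaussians `N(μ, Σ)`, `KL(p ‖ N(μ, Σ))` is minimized by
matching the mean `m` and covariance `S` of `p`. -/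
theorem reverse_KL_minimized_by_moment_matching
    {d : ℕ}
    (p : Measure (Fin d → ℝ)) [IsProbabilityMeasure p]
    (hac : p ≪ (volume : Measure (Fin d → ℝ)))
    (hmom2 : ∀ i j : Fin d, Integrable (fun x => x i * x j) p)
    (m : Fin d → ℝ) (hm : ∀ i, ∫ x, x i ∂p = m i)
    (S : Matrix (Fin d) (Fin d) ℝ) (hSsymm : S.IsSymm) (hSpd : S.PosDef)
    (hS : ∀ i j, ∫ x, (x i - m i) * (x j - m j) ∂p = S i j) :
    ∀ (μ : Fin d → ℝ) (V : Matrix (Fin d) (Fin d) ℝ),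
      V.IsSymm → V.PosDef →
        klDiv p (gaussMeasure m S) ≤ klDiv p (gaussMeasure μ V) := by
  intro μ V hVsymm hVpd
  -- integrability and value of ∫ log gaussPdf
  have hlogint : ∀ (a : Fin d → ℝ) (C : Matrix (Fin d) (Fin d) ℝ), C.PosDef →
      Integrable (fun x => Real.log (gaussPdf a C x)) p := by
    intro a C hC
    have heq : (fun x : Fin d → ℝ => Real.log (gaussPdf a C x))
        = fun x => ((-(Fintype.card (Fin d) : ℝ) / 2) * Real.log (2 * Real.pi)
          + (-1 / 2) * Real.log C.det) + (-(1 / 2) * ((x - a) ⬝ᵥ (C⁻¹ *ᵥ (x - a)))) := by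
      funext x; rw [MM.log_gaussPdf hC a x]
    rw [heq]
    exact (integrable_const _).add ((MM.int_quad p hmom2 a C).const_mul _)
  have hlogval : ∀ (a : Fin d → ℝ) (C : Matrix (Fin d) (Fin d) ℝ), C.PosDef →
      ∫ x, Real.log (gaussPdf a C x) ∂p
        = ((-(Fintype.card (Fin d) : ℝ) / 2) * Real.log (2 * Real.pi)
          + (-1 / 2) * Real.log C.det)
          + (-(1 / 2)) * ((C⁻¹ * S).trace + (m - a) ⬝ᵥ (C⁻¹ *ᵥ (m - a))) := by
    intro a C hC
    have heq : (fun x : Fin d → ℝ => Real.log (gaussPdf a C x))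
        = fun x => ((-(Fintype.card (Fin d) : ℝ) / 2) * Real.log (2 * Real.pi)
          + (-1 / 2) * Real.log C.det) + (-(1 / 2) * ((x - a) ⬝ᵥ (C⁻¹ *ᵥ (x - a)))) := by
      funext x; rw [MM.log_gaussPdf hC a x]
    rw [heq, integral_add (integrable_const _) ((MM.int_quad p hmom2 a C).const_mul _),
      integral_const, integral_const_mul, MM.integral_quad p hmom2 m hm S hS hSsymm a C]
    simp
  -- the key real inequality
  have hcard : (Fintype.card (Fin d) : ℝ) = (d : ℝ) := by simp
  have hSS : (S⁻¹ * S).trace = (d : ℝ) := by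
    rw [Matrix.nonsing_inv_mul S (isUnit_iff_ne_zero.mpr hSpd.det_pos.ne'), trace_one]
    simp
  have hmm : (m - m) ⬝ᵥ (S⁻¹ *ᵥ (m - m)) = 0 := by simp
  have hdelta : 0 ≤ (m - μ) ⬝ᵥ (V⁻¹ *ᵥ (m - μ)) := by
    have := hVpd.inv.posSemidef.dotProduct_mulVec_nonneg (m - μ)
    simpa using this
  have hkey := MM.key_matrix_ineq hSpd hVpd
  rw [hcard] at hkey
  have hineq : ∫ x, Real.log (gaussPdf μ V x) ∂p ≤ ∫ x, Real.log (gaussPdf m S x) ∂p := by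
    rw [hlogval μ V hVpd, hlogval m S hSpd, hSS, hmm, hcard]
    linarith
  -- case split on integrability of the llr for (μ, V)
  by_cases hV : Integrable (llr p (gaussMeasure μ V)) p
  · have hacS : p ≪ gaussMeasure m S := hac.trans (MM.gaussMeasure_ac m hSpd)
    have hacV : p ≪ gaussMeasure μ V := hac.trans (MM.gaussMeasure_ac μ hVpd)
    have heqS := MM.llr_gauss_eq p hac m hSpd
    have heqV := MM.llr_gauss_eq p hac μ hVpd
    have hvolint : Integrable (llr p volume) p := by
      refine (hV.add (hlogint μ V hVpd)).congr ?_
      filter_upwards [heqV] with x hx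
      simp only [Pi.add_apply, hx]
      ring
    have hSint : Integrable (llr p (gaussMeasure m S)) p :=
      ((hvolint.sub (hlogint m S hSpd)).congr heqS.symm)
    rw [klDiv, klDiv, if_pos ⟨hacS, hSint⟩, if_pos ⟨hacV, hV⟩]
    rw [EReal.coe_le_coe_iff]
    have iS : ∫ x, llr p (gaussMeasure m S) x ∂p
        = ∫ x, llr p volume x ∂p - ∫ x, Real.log (gaussPdf m S x) ∂p := by
      rw [integral_congr_ae heqS, integral_sub hvolint (hlogint m S hSpd)]
    have iV : ∫ x, llr p (gaussMeasure μ V) x ∂p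
        = ∫ x, llr p volume x ∂p - ∫ x, Real.log (gaussPdf μ V x) ∂p := by
      rw [integral_congr_ae heqV, integral_sub hvolint (hlogint μ V hVpd)]
    rw [iS, iV]
    linarith
  · have : klDiv p (gaussMeasure μ V) = ⊤ := by
      rw [klDiv, if_neg (fun h => hV h.2)]
    rw [this]
    exact le_top
end

section
/- Let μ be a σ-finite measure on a measurable space X and let p, q : X → (0, ∞) be measurable probability densities with respect to μ that are positive μ-a.e. Suppose there exists ε > 0 such that ∫ p^{1+ε} q^{−ε} dμ < ∞ and ∫ p (log(p/q))² dμ < ∞. Then the α-divergence D_α[p‖q] = (1/(α(1−α)))(1 − ∫ p^α q^{1−α} dμ) satisfies lim_{α → 1⁻} D_α[p‖q] = KL[p‖q] = ∫ p log(p/q) dμ. -/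
open MeasureTheory Filter

/-- **α → 1 limit of the α-divergence is the forward KL divergence
(Eq. (27) of the paper).**
`D_α[p‖q] = (1/(α(1−α)))(1 − ∫ p^α q^{1−α} dμ) → ∫ p log(p/q) dμ` as `α → 1⁻`. -/
theorem alpha_divergence_tendsto_forward_KL
    {X : Type*} [MeasurableSpace X] (μ : Measure X) [SigmaFinite μ]
    (p q : X → ℝ) (hpm : Measurable p) (hqm : Measurable q)
    (hp0 : ∀ᵐ x ∂μ, 0 < p x) (hq0 : ∀ᵐ x ∂μ, 0 < q x)
    (hpInt : Integrable p μ) (hqInt : Integrable q μ)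
    (hp1 : ∫ x, p x ∂μ = 1) (hq1 : ∫ x, q x ∂μ = 1)
    (ε : ℝ) (hε : 0 < ε)
    (hmoment : Integrable (fun x => p x ^ (1 + ε) * q x ^ (-ε)) μ)
    (hlog2 : Integrable (fun x => p x * (Real.log (p x / q x)) ^ 2) μ) :
    Tendsto
      (fun α : ℝ => (1 / (α * (1 - α))) * (1 - ∫ x, p x ^ α * q x ^ (1 - α) ∂μ))
      (nhdsWithin 1 (Set.Iio 1))
      (nhds (∫ x, p x * Real.log (p x / q x) ∂μ)) := by
  set L : X → ℝ := fun x => Real.log (p x / q x) with hLdef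
  -- the key identity : for p x, q x > 0, p^α q^(1-α) = p * exp ((α-1) * L)
  have key : ∀ x : X, 0 < p x → 0 < q x → ∀ α : ℝ,
      p x ^ α * q x ^ (1 - α) = p x * Real.exp ((α - 1) * L x) := by
    intro x hp hq α
    rw [Real.rpow_def_of_pos hp, Real.rpow_def_of_pos hq, ← Real.exp_add]
    conv_rhs => rw [show p x = Real.exp (Real.log (p x)) from (Real.exp_log hp).symm]
    rw [← Real.exp_add, Real.exp_eq_exp]
    simp only [hLdef]
    rw [Real.log_div hp.ne' hq.ne']
    ring
  -- integrability of p * L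
  have hmL : Measurable L := (Real.measurable_log.comp (hpm.div hqm))
  have hpL : Integrable (fun x => p x * L x) μ := by
    refine Integrable.mono'
      ((hpInt.add hlog2).div_const 2) ((hpm.mul hmL).aestronglyMeasurable) ?_
    filter_upwards [hp0] with x hp
    have h1 : |L x| ≤ (1 + L x ^ 2) / 2 := by nlinarith [sq_nonneg (|L x| - 1), sq_abs (L x)]
    have h2 : ‖p x * L x‖ = p x * |L x| := by
      rw [norm_mul, Real.norm_eq_abs, Real.norm_eq_abs, abs_of_pos hp]
    rw [h2]
    calc p x * |L x| ≤ p x * ((1 + L x ^ 2) / 2) := mul_le_mul_of_nonneg_left h1 hp.le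
      _ = (p x + p x * L x ^ 2) / 2 := by ring
  -- integrability of p^α q^(1-α) for α ∈ (1/2, 1)
  have hfInt : ∀ α ∈ Set.Ioo (1/2 : ℝ) 1,
      Integrable (fun x => p x ^ α * q x ^ (1 - α)) μ := by
    intro α hα
    have hmeas : Measurable (fun x => p x ^ α * q x ^ (1 - α)) := by fun_prop
    refine Integrable.mono' ((hpInt.const_mul α).add (hqInt.const_mul (1 - α)))
      hmeas.aestronglyMeasurable ?_
    filter_upwards [hp0, hq0] with x hp hq
    rw [Real.norm_eq_abs, abs_of_nonneg (by positivity)]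
    exact Real.geom_mean_le_arith_mean2_weighted (by linarith [hα.1]) (by linarith [hα.2])
      hp.le hq.le (by ring)
  -- the difference quotient integrand
  set F : ℝ → X → ℝ := fun α x => (p x - p x ^ α * q x ^ (1 - α)) / (1 - α) with hFdef
  have hIoo : Set.Ioo (1/2 : ℝ) 1 ∈ nhdsWithin (1:ℝ) (Set.Iio 1) :=
    Ioo_mem_nhdsLT_of_mem ⟨by norm_num, le_refl 1⟩
  -- dominated convergence
  have hT1 : Tendsto (fun α => ∫ x, F α x ∂μ) (nhdsWithin 1 (Set.Iio 1))
      (nhds (∫ x, p x * L x ∂μ)) := by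
    refine tendsto_integral_filter_of_dominated_convergence
      (fun x => |p x * L x| + (p x + q x)) ?_ ?_ ?_ ?_
    · filter_upwards [hIoo] with α _
      simp only [hFdef]
      exact ((hpm.sub (by fun_prop)).div_const _).aestronglyMeasurable
    · filter_upwards [hIoo] with α hα
      filter_upwards [hp0, hq0] with x hp hq
      have ht : 0 < 1 - α := by linarith [hα.2]
      have ht2 : 1 - α ≤ 1/2 := by linarith [hα.1]
      simp only [hFdef]
      rw [key x hp hq α]
      set t := 1 - α with htdef
      have habsL : |p x * L x| = p x * |L x| := by rw [abs_mul, abs_of_pos hp]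
      have hFval : (p x - p x * Real.exp ((α - 1) * L x)) / t
          = p x * ((1 - Real.exp (-(t * L x))) / t) := by
        rw [show (α - 1 : ℝ) * L x = -(t * L x) by rw [htdef]; ring]; ring
      rw [hFval, norm_mul, Real.norm_eq_abs, Real.norm_eq_abs, abs_of_pos hp]
      rcases le_or_gt 0 (L x) with hL | hL
      · -- 0 ≤ L : |1 - exp(-tL)|/t ≤ L
        have h1 : Real.exp (-(t * L x)) ≤ 1 := by
          rw [Real.exp_le_one_iff]
          simp only [neg_nonpos]
          positivity
        have h2 : 1 - t * L x ≤ Real.exp (-(t * L x)) := by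
          have := Real.add_one_le_exp (-(t * L x)); linarith
        have h3 : |(1 - Real.exp (-(t * L x))) / t| ≤ |L x| := by
          rw [abs_div, abs_of_pos ht, abs_of_nonneg (by linarith), abs_of_nonneg hL,
            div_le_iff₀ ht]
          nlinarith
        have hb : p x * |(1 - Real.exp (-(t * L x))) / t| ≤ p x * |L x| :=
          mul_le_mul_of_nonneg_left h3 hp.le
        have hpq : 0 ≤ p x + q x := by positivity
        linarith
      · -- L < 0 : exp(-tL) - 1 ≤ 2t(exp(-L/2) - 1) by convexity, then AM-GM
        have hcv := convexOn_exp.2 (Set.mem_univ (0:ℝ)) (Set.mem_univ (-(L x)/2))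
          (show (0:ℝ) ≤ 1 - 2*t by linarith) (show (0:ℝ) ≤ 2*t by linarith)
          (show (1 - 2*t) + 2*t = 1 by ring)
        simp only [smul_eq_mul, mul_zero, zero_add, Real.exp_zero, mul_one] at hcv
        rw [show (2*t) * (-(L x)/2) = -(t * L x) by ring] at hcv
        have hgm : p x * Real.exp (-(L x)/2) ≤ (p x + q x) / 2 := by
          have hexp : p x * Real.exp (-(L x)/2) = p x ^ ((1:ℝ)/2) * q x ^ ((1:ℝ)/2) := by
            rw [Real.rpow_def_of_pos hp, Real.rpow_def_of_pos hq, ← Real.exp_add]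
            conv_lhs => rw [show p x = Real.exp (Real.log (p x)) from (Real.exp_log hp).symm]
            rw [← Real.exp_add, Real.exp_eq_exp]
            simp only [hLdef]
            rw [Real.log_div hp.ne' hq.ne']
            ring
          rw [hexp]
          have := Real.geom_mean_le_arith_mean2_weighted (by norm_num : (0:ℝ) ≤ 1/2)
            (by norm_num : (0:ℝ) ≤ 1/2) hp.le hq.le (by norm_num)
          linarith
        have h1le : 1 ≤ Real.exp (-(t * L x)) := by
          rw [Real.one_le_exp_iff]; nlinarith
        have habs : |(1 - Real.exp (-(t * L x))) / t| =
            (Real.exp (-(t * L x)) - 1) / t := by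
          rw [abs_div, abs_of_pos ht, abs_of_nonpos (by linarith)]
          ring
        have h2 : (Real.exp (-(t * L x)) - 1) / t ≤ 2 * Real.exp (-(L x)/2) := by
          rw [div_le_iff₀ ht]
          have h3 : 0 ≤ Real.exp (-(L x)/2) := (Real.exp_pos _).le
          nlinarith
        have hb : p x * |(1 - Real.exp (-(t * L x))) / t| ≤ p x + q x := by
          rw [habs]
          calc p x * ((Real.exp (-(t * L x)) - 1) / t)
              ≤ p x * (2 * Real.exp (-(L x)/2)) := mul_le_mul_of_nonneg_left h2 hp.le
            _ = 2 * (p x * Real.exp (-(L x)/2)) := by ring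
            _ ≤ 2 * ((p x + q x) / 2) := by linarith [hgm]
            _ = p x + q x := by ring
        have hnn : 0 ≤ p x * |L x| := by positivity
        linarith
    · exact hpL.abs.add (hpInt.add hqInt)
    · -- pointwise convergence
      filter_upwards [hp0, hq0] with x hp hq
      have hD : HasDerivAt (fun α : ℝ => Real.exp ((α - 1) * L x)) (L x) 1 := by
        have h1 : HasDerivAt (fun α : ℝ => (α - 1) * L x) (L x) 1 := by
          simpa using ((hasDerivAt_id (1:ℝ)).sub_const 1).mul_const (L x)
        have h2 := h1.exp
        simpa using h2
      have hslope := hasDerivAt_iff_tendsto_slope.mp hD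
      have hmono : nhdsWithin (1:ℝ) (Set.Iio 1) ≤ nhdsWithin 1 {(1:ℝ)}ᶜ :=
        nhdsWithin_mono 1 (fun y hy => ne_of_lt hy)
      have hslope' := (hslope.mono_left hmono).const_mul (p x)
      refine Tendsto.congr' ?_ hslope'
      filter_upwards [self_mem_nhdsWithin] with α hα
      have hα1 : α - 1 ≠ 0 := by
        simp only [Set.mem_Iio] at hα
        intro h; rw [sub_eq_zero] at h; exact absurd h (ne_of_lt hα)
      simp only [hFdef, slope_def_field]
      rw [key x hp hq α]
      simp only [sub_self, zero_mul, Real.exp_zero]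
      have h1α : (1:ℝ) - α ≠ 0 := by
        intro h; apply hα1; linarith [sub_eq_zero.mp h]
      field_simp
      ring
  -- prefactor tends to 1
  have hT2 : Tendsto (fun α : ℝ => 1/α) (nhdsWithin 1 (Set.Iio 1)) (nhds 1) := by
    have h : Tendsto (fun α : ℝ => 1/α) (nhds 1) (nhds (1/1)) :=
      (continuousAt_const.div continuousAt_id one_ne_zero).tendsto
    simpa using h.mono_left nhdsWithin_le_nhds
  have hmul := hT2.mul hT1
  rw [one_mul] at hmul
  refine Tendsto.congr' ?_ hmul
  filter_upwards [hIoo] with α hα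
  have hα0 : α ≠ 0 := by have := hα.1; intro h; rw [h] at this; norm_num at this
  have h1α : (1:ℝ) - α ≠ 0 := by have := hα.2; intro h; linarith [sub_eq_zero.mp h]
  have hI : ∫ x, F α x ∂μ
      = (1 - ∫ x, p x ^ α * q x ^ (1 - α) ∂μ) / (1 - α) := by
    simp only [hFdef]
    rw [integral_div, integral_sub hpInt (hfInt α hα), hp1]
  rw [hI]
  field_simp
end

section
/- Let μ be a σ-finite measure on a measurable space X and let p, q : X → (0, ∞) be measurable probability densities with respect to μ that are positive μ-a.e. Suppose there exists ε > 0 such that ∫ q^{1+ε} p^{−ε} dμ < ∞ and ∫ q (log(q/p))² dμ < ∞. Then the α-divergence D_α[p‖q] = (1/(α(1−α)))(1 − ∫ p^α q^{1−α} dμ) satisfies lim_{α → 0⁺} D_α[p‖q] = KL[q‖p] = ∫ q log(q/p) dμ. -/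
open MeasureTheory Filter

/-- Key pointwise identity: `p^a * q^(1-a) = q * exp(a * log(p/q))` for positive `p, q`. -/
lemma alpha_div_key_eq {p q : ℝ} (hp : 0 < p) (hq : 0 < q) (a : ℝ) :
    p ^ a * q ^ (1 - a) = q * Real.exp (a * Real.log (p / q)) := by
  rw [Real.log_div hp.ne' hq.ne', Real.rpow_def_of_pos hp, Real.rpow_def_of_pos hq,
    ← Real.exp_add]
  nth_rewrite 2 [← Real.exp_log hq]
  rw [← Real.exp_add]
  congr 1
  ring

/-- Pointwise domination bound: for `0 < α ≤ δ`,
`|1 - exp(α t)| / α ≤ |t| + exp(δ t)/δ`. -/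
lemma alpha_div_exp_bound (t : ℝ) {α δ : ℝ} (hα : 0 < α) (hαδ : α ≤ δ) :
    |1 - Real.exp (α * t)| / α ≤ |t| + Real.exp (δ * t) / δ := by
  have hδ : 0 < δ := hα.trans_le hαδ
  rcases le_or_gt t 0 with ht | ht
  · have h1 : Real.exp (α * t) ≤ 1 := by
      rw [Real.exp_le_one_iff]
      exact mul_nonpos_of_nonneg_of_nonpos hα.le ht
    have h2 : 1 - Real.exp (α * t) ≤ α * (-t) := by
      have := Real.add_one_le_exp (α * t); nlinarith
    have h3 : |1 - Real.exp (α * t)| ≤ α * |t| := by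
      rw [abs_of_nonneg (by linarith), abs_of_nonpos ht]; linarith
    have h4 : |1 - Real.exp (α * t)| / α ≤ |t| := by
      rw [div_le_iff₀ hα]; linarith [h3, mul_comm α |t|]
    have h5 : 0 ≤ Real.exp (δ * t) / δ := by positivity
    linarith
  · have hαδ' : α / δ ≤ 1 := (div_le_one hδ).mpr hαδ
    have hc := convexOn_exp.2 (Set.mem_univ (0 : ℝ)) (Set.mem_univ (δ * t))
      (by linarith : (0:ℝ) ≤ 1 - α / δ) (by positivity : (0:ℝ) ≤ α / δ) (by ring)
    simp only [smul_eq_mul, mul_zero, zero_add, Real.exp_zero, mul_one] at hc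
    have harg : α / δ * (δ * t) = α * t := by field_simp
    rw [harg] at hc
    -- hc : exp (α * t) ≤ (1 - α/δ) + α/δ * exp (δ * t)
    have h1 : 1 ≤ Real.exp (α * t) := Real.one_le_exp (by positivity)
    have h2 : |1 - Real.exp (α * t)| = Real.exp (α * t) - 1 := by
      rw [abs_of_nonpos (by linarith)]; ring
    rw [h2]
    have h3 : (Real.exp (α * t) - 1) / α ≤ Real.exp (δ * t) / δ := by
      rw [div_le_iff₀ hα]
      have hd0 : 0 ≤ α / δ := by positivity
      have : Real.exp (α * t) - 1 ≤ α / δ * Real.exp (δ * t) := by linarith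
      calc Real.exp (α * t) - 1 ≤ α / δ * Real.exp (δ * t) := this
        _ = Real.exp (δ * t) / δ * α := by ring
    have h5 : 0 ≤ |t| := abs_nonneg t
    linarith

/-- **α → 0 limit of the α-divergence is the reverse KL divergence
(Eq. (27) of the paper).**
`D_α[p‖q] = (1/(α(1−α)))(1 − ∫ p^α q^{1−α} dμ) → ∫ q log(q/p) dμ` as `α → 0⁺`. -/
theorem alpha_divergence_tendsto_reverse_KL
    {X : Type*} [MeasurableSpace X] (μ : Measure X) [SigmaFinite μ]
    (p q : X → ℝ) (hpm : Measurable p) (hqm : Measurable q)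
    (hp0 : ∀ᵐ x ∂μ, 0 < p x) (hq0 : ∀ᵐ x ∂μ, 0 < q x)
    (hpInt : Integrable p μ) (hqInt : Integrable q μ)
    (hp1 : ∫ x, p x ∂μ = 1) (hq1 : ∫ x, q x ∂μ = 1)
    (ε : ℝ) (hε : 0 < ε)
    (hmoment : Integrable (fun x => q x ^ (1 + ε) * p x ^ (-ε)) μ)
    (hlog2 : Integrable (fun x => q x * (Real.log (q x / p x)) ^ 2) μ) :
    Tendsto
      (fun α : ℝ => (1 / (α * (1 - α))) * (1 - ∫ x, p x ^ α * q x ^ (1 - α) ∂μ))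
      (nhdsWithin 0 (Set.Ioi 0))
      (nhds (∫ x, q x * Real.log (q x / p x) ∂μ)) := by
  set L : X → ℝ := fun x => Real.log (p x / q x) with hLdef
  have hLm : Measurable L := (hpm.div hqm).log
  set δ : ℝ := min ε 1 with hδdef
  have hδ0 : 0 < δ := lt_min hε one_pos
  have hδ1 : δ ≤ 1 := min_le_right _ _
  -- the target integral rewritten via L
  have hKL_eq : ∫ x, q x * Real.log (q x / p x) ∂μ = ∫ x, q x * (-(L x)) ∂μ := by
    refine integral_congr_ae ?_
    filter_upwards [hp0, hq0] with x hpx hqx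
    simp only [hLdef]
    rw [Real.log_div hqx.ne' hpx.ne', Real.log_div hpx.ne' hqx.ne']
    ring
  -- integrability of domination pieces
  have hqL2 : Integrable (fun x => q x * (L x) ^ 2) μ := by
    refine hlog2.congr ?_
    filter_upwards [hp0, hq0] with x hpx hqx
    simp only [hLdef]
    rw [Real.log_div hqx.ne' hpx.ne', Real.log_div hpx.ne' hqx.ne']
    ring
  have hqabsL : Integrable (fun x => q x * |L x|) μ := by
    refine ((hqInt.add hqL2).div_const 2).mono'
      ((hqm.mul hLm.abs).aestronglyMeasurable) ?_
    filter_upwards [hq0] with x hqx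
    have h1 : |L x| ≤ (1 + (L x) ^ 2) / 2 := by nlinarith [sq_abs (L x), sq_nonneg (|L x| - 1)]
    rw [Real.norm_eq_abs, abs_of_nonneg (by positivity)]
    calc q x * |L x| ≤ q x * ((1 + (L x) ^ 2) / 2) :=
          mul_le_mul_of_nonneg_left h1 hqx.le
      _ = (q x + q x * (L x) ^ 2) / 2 := by ring
  have hqexp_gen : ∀ a : ℝ, 0 ≤ a → a ≤ 1 →
      Integrable (fun x => q x * Real.exp (a * L x)) μ := by
    intro a ha0 ha1
    refine ((hpInt.const_mul a).add (hqInt.const_mul (1 - a))).mono'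
      ((hqm.mul ((measurable_const.mul hLm).exp)).aestronglyMeasurable) ?_
    filter_upwards [hp0, hq0] with x hpx hqx
    rw [Real.norm_eq_abs, abs_of_nonneg (by positivity), ← alpha_div_key_eq hpx hqx a]
    exact Real.geom_mean_le_arith_mean2_weighted ha0 (by linarith) hpx.le hqx.le (by ring)
  have hqexp : Integrable (fun x => q x * Real.exp (δ * L x)) μ :=
    hqexp_gen δ hδ0.le hδ1
  have hG : Integrable (fun x => q x * |L x| + q x * Real.exp (δ * L x) / δ) μ :=
    hqabsL.add (hqexp.div_const δ)
  -- Step A : dominated convergence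
  have hmemδ : Set.Ioo (0:ℝ) δ ∈ nhdsWithin (0:ℝ) (Set.Ioi 0) :=
    Ioo_mem_nhdsGT_of_mem ⟨le_refl 0, hδ0⟩
  have hA : Tendsto (fun α : ℝ => ∫ x, q x * ((1 - Real.exp (α * L x)) / α) ∂μ)
      (nhdsWithin 0 (Set.Ioi 0)) (nhds (∫ x, q x * (-(L x)) ∂μ)) := by
    refine tendsto_integral_filter_of_dominated_convergence _ ?_ ?_ hG ?_
    · refine Eventually.of_forall fun α => ?_
      exact (hqm.mul (((measurable_const.sub
        ((measurable_const.mul hLm).exp))).div_const α)).aestronglyMeasurable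
    · filter_upwards [hmemδ] with α hα
      filter_upwards [hp0, hq0] with x hpx hqx
      rw [Real.norm_eq_abs, abs_mul, abs_of_nonneg hqx.le, abs_div, abs_of_pos hα.1]
      calc q x * (|1 - Real.exp (α * L x)| / α)
          ≤ q x * (|L x| + Real.exp (δ * L x) / δ) :=
            mul_le_mul_of_nonneg_left (alpha_div_exp_bound (L x) hα.1 hα.2.le) hqx.le
        _ = q x * |L x| + q x * Real.exp (δ * L x) / δ := by ring
    · refine Eventually.of_forall fun x => ?_
      have hd : HasDerivAt (fun α : ℝ => Real.exp (α * L x)) (L x) 0 := by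
        have h := (hasDerivAt_mul_const (L x) (x := (0:ℝ))).exp
        simpa using h
      have hs := hasDerivAt_iff_tendsto_slope.mp hd
      have hmono : nhdsWithin (0:ℝ) (Set.Ioi 0) ≤ nhdsWithin (0:ℝ) {(0:ℝ)}ᶜ :=
        nhdsWithin_mono _ (fun y hy => ne_of_gt hy)
      have hs' : Tendsto (fun α : ℝ => (1 - Real.exp (α * L x)) / α)
          (nhdsWithin 0 (Set.Ioi 0)) (nhds (-(L x))) := by
        have h2 := ((hs.mono_left hmono)).neg
        refine h2.congr fun α => ?_
        rw [slope_def_field]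
        simp only [zero_mul, Real.exp_zero, sub_zero]
        ring
      exact hs'.const_mul (q x)
  -- Step B : eventual equality
  have hB : ∀ᶠ α in nhdsWithin (0:ℝ) (Set.Ioi 0),
      (1 / (α * (1 - α))) * (1 - ∫ x, p x ^ α * q x ^ (1 - α) ∂μ)
        = (1 - α)⁻¹ * ∫ x, q x * ((1 - Real.exp (α * L x)) / α) ∂μ := by
    have hmem1 : Set.Ioo (0:ℝ) 1 ∈ nhdsWithin (0:ℝ) (Set.Ioi 0) :=
      Ioo_mem_nhdsGT_of_mem ⟨le_refl 0, one_pos⟩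
    filter_upwards [hmem1] with α hα
    have hα0 := hα.1
    have hα1 := hα.2
    have hae : (fun x => p x ^ α * q x ^ (1 - α)) =ᵐ[μ]
        fun x => q x * Real.exp (α * L x) := by
      filter_upwards [hp0, hq0] with x hpx hqx
      exact alpha_div_key_eq hpx hqx α
    have hint_qe : Integrable (fun x => q x * Real.exp (α * L x)) μ :=
      hqexp_gen α hα0.le hα1.le
    rw [integral_congr_ae hae]
    have h1 : (1:ℝ) - ∫ x, q x * Real.exp (α * L x) ∂μ
        = ∫ x, (q x - q x * Real.exp (α * L x)) ∂μ := by
      rw [integral_sub hqInt hint_qe, hq1]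
    rw [h1]
    have h2 : ∫ x, q x * ((1 - Real.exp (α * L x)) / α) ∂μ
        = (∫ x, (q x - q x * Real.exp (α * L x)) ∂μ) / α := by
      rw [← integral_div]
      refine integral_congr_ae (Eventually.of_forall fun x => ?_)
      ring
    rw [h2, one_div, mul_inv, div_eq_mul_inv]
    ring
  -- Step C : combine
  have hC : Tendsto (fun α : ℝ => (1 - α)⁻¹) (nhdsWithin (0:ℝ) (Set.Ioi 0)) (nhds 1) := by
    have hcont : ContinuousAt (fun α : ℝ => (1 - α)⁻¹) 0 :=
      ((continuous_const.sub continuous_id).continuousAt).inv₀ (by norm_num)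
    have h := hcont.tendsto.mono_left (nhdsWithin_le_nhds (s := Set.Ioi (0:ℝ)))
    simpa using h
  have hD := hC.mul hA
  rw [hKL_eq]
  refine Tendsto.congr' (hB.mono fun α h => h.symm) ?_
  simpa using hD
end
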